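/- Secant-squared stationary radial solution: Let β ≠ 0 and C₄, C₅ be real constants and F : ℝ → ℝ any differentiable function. Write r = √(x²+y²). Then the time-independent functions u = 6β²·sec²(βr), v = 2β²·(3sec²(βr) − 2), w = C₄ + C₅·r − 6β²·sec²(βr) satisfy system (3-1) with d₁ = d₂ = d₃ = 1 and α = −1 at every point (t,x,y) with (x,y) ≠ (0,0) and cos(β·√(x²+y²)) ≠ 0. -/

import Mathlib

/-- Partial derivative with respect to `t` of a function of `(t,x,y)`. -/
noncomputable def pdT (f : ℝ × ℝ × ℝ → ℝ) (p : ℝ × ℝ × ℝ) : ℝ := fderiv ℝ f p (1, 0, 0)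
/-- Partial derivative with respect to `x`. -/
noncomputable def pdX (f : ℝ × ℝ × ℝ → ℝ) (p : ℝ × ℝ × ℝ) : ℝ := fderiv ℝ f p (0, 1, 0)
/-- Partial derivative with respect to `y`. -/
noncomputable def pdY (f : ℝ × ℝ × ℝ → ℝ) (p : ℝ × ℝ × ℝ) : ℝ := fderiv ℝ f p (0, 0, 1)

/-- `(u,v,w)` solves system (3-1), the convective Lotka–Volterra system (`k = 1`)
whose stream function is `Ψ = F(x²+y²) + α·arctan(x/y)`; here `F'` denotes the
derivative of `F`. -/
def Solves31 (α d₁ d₂ d₃ : ℝ) (F' : ℝ → ℝ) (u v w : ℝ × ℝ × ℝ → ℝ)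
    (Ω : Set (ℝ × ℝ × ℝ)) : Prop :=
  ∀ p ∈ Ω,
    (pdT u p - α * (p.2.1 * pdX u p + p.2.2 * pdY u p) / (p.2.1 ^ 2 + p.2.2 ^ 2)
        + 2 * F' (p.2.1 ^ 2 + p.2.2 ^ 2) * (p.2.1 * pdY u p - p.2.2 * pdX u p)
      = d₁ * (pdX (pdX u) p + pdY (pdY u) p) - u p * v p) ∧
    (pdT v p - α * (p.2.1 * pdX v p + p.2.2 * pdY v p) / (p.2.1 ^ 2 + p.2.2 ^ 2)
        + 2 * F' (p.2.1 ^ 2 + p.2.2 ^ 2) * (p.2.1 * pdY v p - p.2.2 * pdX v p)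
      = d₂ * (pdX (pdX v) p + pdY (pdY v) p) - u p * v p) ∧
    (pdT w p - α * (p.2.1 * pdX w p + p.2.2 * pdY w p) / (p.2.1 ^ 2 + p.2.2 ^ 2)
        + 2 * F' (p.2.1 ^ 2 + p.2.2 ^ 2) * (p.2.1 * pdY w p - p.2.2 * pdX w p)
      = d₃ * (pdX (pdX w) p + pdY (pdY w) p) + u p * v p)


section SecantAux

open Real

noncomputable def PX : ℝ × ℝ × ℝ →L[ℝ] ℝ :=
  (ContinuousLinearMap.fst ℝ ℝ ℝ).comp (ContinuousLinearMap.snd ℝ ℝ (ℝ × ℝ))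
noncomputable def PY : ℝ × ℝ × ℝ →L[ℝ] ℝ :=
  (ContinuousLinearMap.snd ℝ ℝ ℝ).comp (ContinuousLinearMap.snd ℝ ℝ (ℝ × ℝ))

@[simp] lemma PX_apply (v : ℝ × ℝ × ℝ) : PX v = v.2.1 := rfl
@[simp] lemma PY_apply (v : ℝ × ℝ × ℝ) : PY v = v.2.2 := rfl

lemma hasFDerivAt_x (p : ℝ × ℝ × ℝ) : HasFDerivAt (fun q : ℝ × ℝ × ℝ => q.2.1) PX p :=
  PX.hasFDerivAt
lemma hasFDerivAt_y (p : ℝ × ℝ × ℝ) : HasFDerivAt (fun q : ℝ × ℝ × ℝ => q.2.2) PY p :=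
  PY.hasFDerivAt

lemma hasFDerivAt_sq (p : ℝ × ℝ × ℝ) :
    HasFDerivAt (fun q : ℝ × ℝ × ℝ => q.2.1 ^ 2 + q.2.2 ^ 2)
      ((2 * p.2.1) • PX + (2 * p.2.2) • PY) p := by
  have hx := hasFDerivAt_x p
  have hy := hasFDerivAt_y p
  have h := ((hx.mul hx).add (hy.mul hy))
  have e : ∀ q : ℝ × ℝ × ℝ, q.2.1 * q.2.1 + q.2.2 * q.2.2 = q.2.1 ^ 2 + q.2.2 ^ 2 := by
    intro q; ring
  simp only [Pi.mul_def, Pi.add_def, e] at h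
  refine h.congr_fderiv ?_
  ext v <;> simp <;> ring

lemma hasFDerivAt_radial (g : ℝ → ℝ) (m : ℝ) (p : ℝ × ℝ × ℝ)
    (hp : p.2.1 ^ 2 + p.2.2 ^ 2 ≠ 0)
    (hg : HasDerivAt g m (Real.sqrt (p.2.1 ^ 2 + p.2.2 ^ 2))) :
    HasFDerivAt (fun q : ℝ × ℝ × ℝ => g (Real.sqrt (q.2.1 ^ 2 + q.2.2 ^ 2)))
      ((m / (2 * Real.sqrt (p.2.1 ^ 2 + p.2.2 ^ 2))) •
        ((2 * p.2.1) • PX + (2 * p.2.2) • PY)) p := by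
  have h1 := (Real.hasDerivAt_sqrt hp).comp_hasFDerivAt p (hasFDerivAt_sq p)
  have h2 := hg.comp_hasFDerivAt p h1
  refine h2.congr_fderiv ?_
  rw [smul_smul]
  congr 1
  field_simp

lemma snd_ne_pos {p : ℝ × ℝ × ℝ} (hp : p.2 ≠ 0) : 0 < p.2.1 ^ 2 + p.2.2 ^ 2 := by
  have h01 : p.2.1 ≠ 0 ∨ p.2.2 ≠ 0 := by
    by_contra h; push_neg at h; exact hp (Prod.ext h.1 h.2)
  rcases h01 with h | h
  · positivity
  · positivity

/-- first derivative facts for a radial function -/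
lemma radial_pd (g : ℝ → ℝ) (m : ℝ) (p : ℝ × ℝ × ℝ) (hp : p.2 ≠ 0)
    (hg : HasDerivAt g m (Real.sqrt (p.2.1 ^ 2 + p.2.2 ^ 2))) :
    pdT (fun q : ℝ × ℝ × ℝ => g (Real.sqrt (q.2.1 ^ 2 + q.2.2 ^ 2))) p = 0 ∧
    pdX (fun q : ℝ × ℝ × ℝ => g (Real.sqrt (q.2.1 ^ 2 + q.2.2 ^ 2))) p
      = m * p.2.1 / Real.sqrt (p.2.1 ^ 2 + p.2.2 ^ 2) ∧
    pdY (fun q : ℝ × ℝ × ℝ => g (Real.sqrt (q.2.1 ^ 2 + q.2.2 ^ 2))) p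
      = m * p.2.2 / Real.sqrt (p.2.1 ^ 2 + p.2.2 ^ 2) := by
  have hs := snd_ne_pos hp
  have hr : Real.sqrt (p.2.1 ^ 2 + p.2.2 ^ 2) ≠ 0 := by
    positivity
  have h := (hasFDerivAt_radial g m p hs.ne' hg).fderiv
  refine ⟨?_, ?_, ?_⟩ <;>
    simp only [pdT, pdX, pdY, h, ContinuousLinearMap.smul_apply,
      ContinuousLinearMap.add_apply, PX_apply, PY_apply] <;>
    field_simp [hr] <;> ring_nf <;> field_simp

lemma isOpen_dom (β : ℝ) :
    IsOpen {q : ℝ × ℝ × ℝ | q.2 ≠ 0 ∧ Real.cos (β * Real.sqrt (q.2.1 ^ 2 + q.2.2 ^ 2)) ≠ 0} := by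
  apply IsOpen.inter
  · exact isOpen_compl_singleton.preimage continuous_snd
  · apply isOpen_compl_singleton.preimage
    fun_prop

/-- master lemma: all pd facts for a radial function on the domain -/
lemma radial_master (β : ℝ) (g g₁ k₂ : ℝ → ℝ)
    (hg : ∀ r : ℝ, r ≠ 0 → Real.cos (β * r) ≠ 0 → HasDerivAt g (g₁ r) r)
    (hk : ∀ r : ℝ, r ≠ 0 → Real.cos (β * r) ≠ 0 → HasDerivAt (fun t => g₁ t / t) (k₂ r) r)
    (p : ℝ × ℝ × ℝ) (hp : p.2 ≠ 0)
    (hc : Real.cos (β * Real.sqrt (p.2.1 ^ 2 + p.2.2 ^ 2)) ≠ 0) :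
    pdT (fun q : ℝ × ℝ × ℝ => g (Real.sqrt (q.2.1 ^ 2 + q.2.2 ^ 2))) p = 0 ∧
    p.2.1 * pdX (fun q : ℝ × ℝ × ℝ => g (Real.sqrt (q.2.1 ^ 2 + q.2.2 ^ 2))) p
      + p.2.2 * pdY (fun q : ℝ × ℝ × ℝ => g (Real.sqrt (q.2.1 ^ 2 + q.2.2 ^ 2))) p
      = g₁ (Real.sqrt (p.2.1 ^ 2 + p.2.2 ^ 2)) * Real.sqrt (p.2.1 ^ 2 + p.2.2 ^ 2) ∧
    p.2.1 * pdY (fun q : ℝ × ℝ × ℝ => g (Real.sqrt (q.2.1 ^ 2 + q.2.2 ^ 2))) p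
      - p.2.2 * pdX (fun q : ℝ × ℝ × ℝ => g (Real.sqrt (q.2.1 ^ 2 + q.2.2 ^ 2))) p = 0 ∧
    pdX (pdX (fun q : ℝ × ℝ × ℝ => g (Real.sqrt (q.2.1 ^ 2 + q.2.2 ^ 2)))) p
      + pdY (pdY (fun q : ℝ × ℝ × ℝ => g (Real.sqrt (q.2.1 ^ 2 + q.2.2 ^ 2)))) p
      = k₂ (Real.sqrt (p.2.1 ^ 2 + p.2.2 ^ 2)) * Real.sqrt (p.2.1 ^ 2 + p.2.2 ^ 2)
        + 2 * (g₁ (Real.sqrt (p.2.1 ^ 2 + p.2.2 ^ 2)) / Real.sqrt (p.2.1 ^ 2 + p.2.2 ^ 2)) := by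
  set f : ℝ × ℝ × ℝ → ℝ := fun q => g (Real.sqrt (q.2.1 ^ 2 + q.2.2 ^ 2)) with hf
  have hs := snd_ne_pos hp
  set r := Real.sqrt (p.2.1 ^ 2 + p.2.2 ^ 2) with hrdef
  have hr : 0 < r := Real.sqrt_pos.mpr hs
  have hr2 : r ^ 2 = p.2.1 ^ 2 + p.2.2 ^ 2 := Real.sq_sqrt hs.le
  obtain ⟨h0, h1, h2⟩ := radial_pd g (g₁ r) p hp (hg r hr.ne' hc)
  rw [← hrdef] at h1 h2
  refine ⟨h0, ?_, ?_, ?_⟩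
  · rw [h1, h2]
    field_simp
    linear_combination (-(g₁ r)) * hr2
  · rw [h1, h2]; ring
  -- second derivatives
  have hV : {q : ℝ × ℝ × ℝ | q.2 ≠ 0 ∧ Real.cos (β * Real.sqrt (q.2.1 ^ 2 + q.2.2 ^ 2)) ≠ 0}
      ∈ nhds p := (isOpen_dom β).mem_nhds ⟨hp, hc⟩
  have hevX : pdX f =ᶠ[nhds p]
      (fun q => (g₁ (Real.sqrt (q.2.1 ^ 2 + q.2.2 ^ 2)) / Real.sqrt (q.2.1 ^ 2 + q.2.2 ^ 2)) * q.2.1) := by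
    filter_upwards [hV] with q hq
    have hsq := snd_ne_pos hq.1
    have hrq : (0:ℝ) < Real.sqrt (q.2.1 ^ 2 + q.2.2 ^ 2) := Real.sqrt_pos.mpr hsq
    have := (radial_pd g (g₁ (Real.sqrt (q.2.1 ^ 2 + q.2.2 ^ 2))) q hq.1
      (hg _ hrq.ne' hq.2)).2.1
    rw [this]; ring
  have hevY : pdY f =ᶠ[nhds p]
      (fun q => (g₁ (Real.sqrt (q.2.1 ^ 2 + q.2.2 ^ 2)) / Real.sqrt (q.2.1 ^ 2 + q.2.2 ^ 2)) * q.2.2) := by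
    filter_upwards [hV] with q hq
    have hsq := snd_ne_pos hq.1
    have hrq : (0:ℝ) < Real.sqrt (q.2.1 ^ 2 + q.2.2 ^ 2) := Real.sqrt_pos.mpr hsq
    have := (radial_pd g (g₁ (Real.sqrt (q.2.1 ^ 2 + q.2.2 ^ 2))) q hq.1
      (hg _ hrq.ne' hq.2)).2.2
    rw [this]; ring
  have hGx : HasFDerivAt (fun q : ℝ × ℝ × ℝ =>
      g₁ (Real.sqrt (q.2.1 ^ 2 + q.2.2 ^ 2)) / Real.sqrt (q.2.1 ^ 2 + q.2.2 ^ 2))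
      ((k₂ r / (2 * r)) • ((2 * p.2.1) • PX + (2 * p.2.2) • PY)) p :=
    hasFDerivAt_radial (fun t => g₁ t / t) (k₂ r) p hs.ne' (hk r hr.ne' hc)
  have hFX : HasFDerivAt (fun q : ℝ × ℝ × ℝ =>
      (g₁ (Real.sqrt (q.2.1 ^ 2 + q.2.2 ^ 2)) / Real.sqrt (q.2.1 ^ 2 + q.2.2 ^ 2)) * q.2.1) _ p :=
    hGx.mul (hasFDerivAt_x p)
  have hFY : HasFDerivAt (fun q : ℝ × ℝ × ℝ =>
      (g₁ (Real.sqrt (q.2.1 ^ 2 + q.2.2 ^ 2)) / Real.sqrt (q.2.1 ^ 2 + q.2.2 ^ 2)) * q.2.2) _ p :=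
    hGx.mul (hasFDerivAt_y p)
  have e1 : pdX (pdX f) p = fderiv ℝ (fun q : ℝ × ℝ × ℝ =>
      (g₁ (Real.sqrt (q.2.1 ^ 2 + q.2.2 ^ 2)) / Real.sqrt (q.2.1 ^ 2 + q.2.2 ^ 2)) * q.2.1) p (0,1,0) := by
    show fderiv ℝ (pdX f) p (0,1,0) = _
    rw [hevX.fderiv_eq]
  have e2 : pdY (pdY f) p = fderiv ℝ (fun q : ℝ × ℝ × ℝ =>
      (g₁ (Real.sqrt (q.2.1 ^ 2 + q.2.2 ^ 2)) / Real.sqrt (q.2.1 ^ 2 + q.2.2 ^ 2)) * q.2.2) p (0,0,1) := by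
    show fderiv ℝ (pdY f) p (0,0,1) = _
    rw [hevY.fderiv_eq]
  rw [e1, e2, hFX.fderiv, hFY.fderiv]
  simp only [ContinuousLinearMap.smul_apply, ContinuousLinearMap.add_apply,
    PX_apply, PY_apply, ← hrdef, smul_eq_mul]
  field_simp
  linear_combination (-(k₂ r)) * hr2

noncomputable def gU (β r : ℝ) : ℝ := 6 * β ^ 2 * ((Real.cos (β * r))⁻¹) ^ 2
noncomputable def gV (β r : ℝ) : ℝ := 2 * β ^ 2 * (3 * ((Real.cos (β * r))⁻¹) ^ 2 - 2)
noncomputable def gW (β C₄ C₅ r : ℝ) : ℝ := C₄ + C₅ * r - 6 * β ^ 2 * ((Real.cos (β * r))⁻¹) ^ 2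
noncomputable def gU1 (β r : ℝ) : ℝ := 12 * β ^ 3 * Real.sin (β * r) * ((Real.cos (β * r))⁻¹) ^ 3
noncomputable def gW1 (β C₅ r : ℝ) : ℝ := C₅ - gU1 β r
noncomputable def kU2 (β r : ℝ) : ℝ :=
  (12 * β ^ 4 * ((Real.cos (β * r))⁻¹) ^ 2
    + 36 * β ^ 4 * Real.sin (β * r) ^ 2 * ((Real.cos (β * r))⁻¹) ^ 4) / r
  - 12 * β ^ 3 * Real.sin (β * r) * ((Real.cos (β * r))⁻¹) ^ 3 / r ^ 2
noncomputable def kW2 (β C₅ r : ℝ) : ℝ := -C₅ / r ^ 2 - kU2 β r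

lemma hasDerivAt_cosb (β r : ℝ) :
    HasDerivAt (fun t => Real.cos (β * t)) (-Real.sin (β * r) * β) r := by
  have hb : HasDerivAt (fun t : ℝ => β * t) β r := by
    simpa using (hasDerivAt_id r).const_mul β
  exact (Real.hasDerivAt_cos (β * r)).comp r hb

lemma hasDerivAt_sinb (β r : ℝ) :
    HasDerivAt (fun t => Real.sin (β * t)) (Real.cos (β * r) * β) r := by
  have hb : HasDerivAt (fun t : ℝ => β * t) β r := by
    simpa using (hasDerivAt_id r).const_mul β
  exact (Real.hasDerivAt_sin (β * r)).comp r hb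

lemma hasDerivAt_gU (β : ℝ) (r : ℝ) (hc : Real.cos (β * r) ≠ 0) :
    HasDerivAt (gU β) (gU1 β r) r := by
  have hinv := (hasDerivAt_cosb β r).inv hc
  have h := HasDerivAt.const_mul (6 * β ^ 2) (hinv.pow 2)
  refine h.congr_deriv ?_
  simp only [Pi.inv_apply, Pi.pow_apply]
  unfold gU1
  field_simp [hc]
  ring_nf
  field_simp

lemma hasDerivAt_gV (β : ℝ) (r : ℝ) (hc : Real.cos (β * r) ≠ 0) :
    HasDerivAt (gV β) (gU1 β r) r := by
  have hinv := (hasDerivAt_cosb β r).inv hc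
  have h := HasDerivAt.const_mul (2 * β ^ 2) ((HasDerivAt.const_mul 3 (hinv.pow 2)).sub_const 2)
  refine h.congr_deriv ?_
  simp only [Pi.inv_apply, Pi.pow_apply]
  unfold gU1
  field_simp [hc]
  ring_nf
  field_simp

lemma hasDerivAt_gW (β C₄ C₅ : ℝ) (r : ℝ) (hc : Real.cos (β * r) ≠ 0) :
    HasDerivAt (gW β C₄ C₅) (gW1 β C₅ r) r := by
  have h1 : HasDerivAt (fun t : ℝ => C₄ + C₅ * t) C₅ r := by
    simpa using ((hasDerivAt_id r).const_mul C₅).const_add C₄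
  have := h1.sub (hasDerivAt_gU β r hc)
  unfold gU at this
  unfold gW gW1
  exact this

lemma hasDerivAt_gU1 (β : ℝ) (r : ℝ) (hc : Real.cos (β * r) ≠ 0) :
    HasDerivAt (gU1 β)
      (12 * β ^ 3 * (Real.cos (β * r) * β) * ((Real.cos (β * r))⁻¹) ^ 3
        + 12 * β ^ 3 * Real.sin (β * r) *
          (3 * ((Real.cos (β * r))⁻¹) ^ 2 * (-(-Real.sin (β * r) * β) / Real.cos (β * r) ^ 2))) r := by
  have hinv := (hasDerivAt_cosb β r).inv hc
  have hs := HasDerivAt.const_mul (12 * β ^ 3) (hasDerivAt_sinb β r)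
  have h := hs.mul (hinv.pow 3)
  unfold gU1
  refine h.congr_deriv ?_
  simp only [Pi.inv_apply, Pi.pow_apply]
  push_cast
  ring

lemma hasDerivAt_kU (β : ℝ) (r : ℝ) (hr : r ≠ 0) (hc : Real.cos (β * r) ≠ 0) :
    HasDerivAt (fun t => gU1 β t / t) (kU2 β r) r := by
  have h := (hasDerivAt_gU1 β r hc).div (hasDerivAt_id r) hr
  refine h.congr_deriv ?_
  simp only [id]
  unfold kU2 gU1
  field_simp
  ring

lemma hasDerivAt_kW (β C₅ : ℝ) (r : ℝ) (hr : r ≠ 0) (hc : Real.cos (β * r) ≠ 0) :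
    HasDerivAt (fun t => gW1 β C₅ t / t) (kW2 β C₅ r) r := by
  have h := ((hasDerivAt_const r C₅).sub (hasDerivAt_gU1 β r hc)).div (hasDerivAt_id r) hr
  have e : (fun t => gW1 β C₅ t / t) = fun t => (C₅ - gU1 β t) / t := by
    unfold gW1; rfl
  rw [e]
  refine h.congr_deriv ?_
  simp only [id, Pi.sub_apply]
  unfold kW2 kU2 gU1
  field_simp
  ring

end SecantAux

/-- Secant-squared stationary radial solution: with `r = √(x²+y²)`, the time-independent
functions `u = 6β² sec²(βr)`, `v = 2β²(3sec²(βr) − 2)`, `w = C₄ + C₅r − 6β² sec²(βr)`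
solve system (3-1) with `d₁ = d₂ = d₃ = 1` and `α = −1` wherever `(x,y) ≠ (0,0)` and
`cos(βr) ≠ 0`. -/

theorem secant_squared_stationary_solution
    (β C₄ C₅ : ℝ) (hβ : β ≠ 0) (F : ℝ → ℝ) (hF : Differentiable ℝ F) :
    Solves31 (-1) 1 1 1 (deriv F)
      (fun p => 6 * β ^ 2 *
        ((Real.cos (β * Real.sqrt (p.2.1 ^ 2 + p.2.2 ^ 2)))⁻¹) ^ 2)
      (fun p => 2 * β ^ 2 *
        (3 * ((Real.cos (β * Real.sqrt (p.2.1 ^ 2 + p.2.2 ^ 2)))⁻¹) ^ 2 - 2))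
      (fun p => C₄ + C₅ * Real.sqrt (p.2.1 ^ 2 + p.2.2 ^ 2)
        - 6 * β ^ 2 * ((Real.cos (β * Real.sqrt (p.2.1 ^ 2 + p.2.2 ^ 2)))⁻¹) ^ 2)
      {p : ℝ × ℝ × ℝ | p.2 ≠ 0 ∧ Real.cos (β * Real.sqrt (p.2.1 ^ 2 + p.2.2 ^ 2)) ≠ 0} := by
  intro p hp
  obtain ⟨hp2, hc⟩ := hp
  have hs := snd_ne_pos hp2
  have hU := radial_master β (gU β) (gU1 β) (kU2 β)
      (fun r _ hcr => hasDerivAt_gU β r hcr) (fun r hr0 hcr => hasDerivAt_kU β r hr0 hcr)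
      p hp2 hc
  have hV := radial_master β (gV β) (gU1 β) (kU2 β)
      (fun r _ hcr => hasDerivAt_gV β r hcr) (fun r hr0 hcr => hasDerivAt_kU β r hr0 hcr)
      p hp2 hc
  have hW := radial_master β (gW β C₄ C₅) (gW1 β C₅) (kW2 β C₅)
      (fun r _ hcr => hasDerivAt_gW β C₄ C₅ r hcr) (fun r hr0 hcr => hasDerivAt_kW β C₅ r hr0 hcr)
      p hp2 hc
  have eU : (fun p : ℝ × ℝ × ℝ => 6 * β ^ 2 *
        ((Real.cos (β * Real.sqrt (p.2.1 ^ 2 + p.2.2 ^ 2)))⁻¹) ^ 2)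
      = (fun q : ℝ × ℝ × ℝ => gU β (Real.sqrt (q.2.1 ^ 2 + q.2.2 ^ 2))) := rfl
  have eV : (fun p : ℝ × ℝ × ℝ => 2 * β ^ 2 *
        (3 * ((Real.cos (β * Real.sqrt (p.2.1 ^ 2 + p.2.2 ^ 2)))⁻¹) ^ 2 - 2))
      = (fun q : ℝ × ℝ × ℝ => gV β (Real.sqrt (q.2.1 ^ 2 + q.2.2 ^ 2))) := rfl
  have eW : (fun p : ℝ × ℝ × ℝ => C₄ + C₅ * Real.sqrt (p.2.1 ^ 2 + p.2.2 ^ 2)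
        - 6 * β ^ 2 * ((Real.cos (β * Real.sqrt (p.2.1 ^ 2 + p.2.2 ^ 2)))⁻¹) ^ 2)
      = (fun q : ℝ × ℝ × ℝ => gW β C₄ C₅ (Real.sqrt (q.2.1 ^ 2 + q.2.2 ^ 2))) := rfl
  rw [eU, eV, eW]
  obtain ⟨hU0, hU1, hU2, hU3⟩ := hU
  obtain ⟨hV0, hV1, hV2, hV3⟩ := hV
  obtain ⟨hW0, hW1, hW2, hW3⟩ := hW
  set r := Real.sqrt (p.2.1 ^ 2 + p.2.2 ^ 2) with hrdef
  have hr : 0 < r := Real.sqrt_pos.mpr hs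
  have hr2 : r ^ 2 = p.2.1 ^ 2 + p.2.2 ^ 2 := Real.sq_sqrt hs.le
  have hsin : Real.sin (β * r) ^ 2 = 1 - Real.cos (β * r) ^ 2 := by
    linarith [Real.sin_sq_add_cos_sq (β * r)]
  refine ⟨?_, ?_, ?_⟩
  · rw [hU0, hU1, hU2, hU3, ← hr2]
    simp only [gU, gV, gU1, kU2]
    rw [hsin, ← hrdef]
    clear hU0 hU1 hU2 hU3 hV0 hV1 hV2 hV3 hW0 hW1 hW2 hW3 hrdef hr2 hsin hp2 hs hF
    clear_value r
    field_simp
    ring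
  · rw [hV0, hV1, hV2, hV3, ← hr2]
    simp only [gU, gV, gU1, kU2]
    rw [hsin, ← hrdef]
    clear hU0 hU1 hU2 hU3 hV0 hV1 hV2 hV3 hW0 hW1 hW2 hW3 hrdef hr2 hsin hp2 hs hF
    clear_value r
    field_simp
    ring
  · rw [hW0, hW1, hW2, hW3, ← hr2]
    simp only [gU, gV, gU1, gW1, kU2, kW2]
    rw [hsin, ← hrdef]
    clear hU0 hU1 hU2 hU3 hV0 hV1 hV2 hV3 hW0 hW1 hW2 hW3 hrdef hr2 hsin hp2 hs hF
    clear_value r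
    field_simp
    ring
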